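/- Let (a_n) be a sequence in [0,1] and (c_n), (s_n) be sequences of nonnegative real numbers such that s_{n+1} ≤ (1 − a_n)·s_n + c_n for all n ∈ ℕ. Assume L ∈ ℕ, L ≥ 1, is an upper bound on (s_n), that θ : ℕ → ℕ is a rate of divergence of Σ_{n=0}^∞ a_n, and that χ : ℕ → ℕ is a Cauchy modulus of the series Σ_{n=0}^∞ c_n. Then s_n → 0 with rate of convergence Σ(k) = θ(χ(2k+1) + 1 + ⌈ln(2L(k+1))⌉) + 1, i.e. for all k ∈ ℕ and all n ≥ Σ(k), s_n ≤ 1/(k+1). -/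

import Mathlib

/-- Quantitative version of Xu's lemma: rate of convergence of `s n` to `0`. -/
theorem stmt_4 (a c s : ℕ → ℝ)
    (ha : ∀ n, a n ∈ Set.Icc (0 : ℝ) 1)
    (hc : ∀ n, 0 ≤ c n) (hs : ∀ n, 0 ≤ s n)
    (hrec : ∀ n : ℕ, s (n + 1) ≤ (1 - a n) * s n + c n)
    (L : ℕ) (hL1 : 1 ≤ L) (hLs : ∀ n, s n ≤ (L : ℝ))
    (θ : ℕ → ℕ) (hθ : ∀ n : ℕ, (n : ℝ) ≤ ∑ i ∈ Finset.range (θ n + 1), a i)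
    (χ : ℕ → ℕ)
    (hχ : ∀ k : ℕ, ∀ n, χ k ≤ n → ∀ p : ℕ,
      ∑ i ∈ Finset.Icc (n + 1) (n + p), c i ≤ 1 / (k + 1)) :
    ∀ k : ℕ, ∀ n,
      θ (χ (2 * k + 1) + 1 + ⌈Real.log ((2 * L * (k + 1) : ℕ) : ℝ)⌉₊) + 1 ≤ n →
      s n ≤ 1 / (k + 1) := by
  -- key recursion unrolling
  have key : ∀ m n, m ≤ n → s n ≤ (∏ i ∈ Finset.Ico m n, (1 - a i)) * s m
      + ∑ i ∈ Finset.Ico m n, c i := by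
    intro m n hmn
    induction n, hmn using Nat.le_induction with
    | base => simp
    | succ n hmn ih =>
      have h1 : (0:ℝ) ≤ 1 - a n := by linarith [(ha n).2]
      calc s (n+1) ≤ (1 - a n) * s n + c n := hrec n
        _ ≤ (1 - a n) * ((∏ i ∈ Finset.Ico m n, (1 - a i)) * s m
              + ∑ i ∈ Finset.Ico m n, c i) + c n := by
            exact add_le_add_left (mul_le_mul_of_nonneg_left ih h1) _
        _ = (∏ i ∈ Finset.Ico m (n+1), (1 - a i)) * s m
              + ((1 - a n) * ∑ i ∈ Finset.Ico m n, c i + c n) := by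
            rw [Finset.prod_Ico_succ_top hmn]; ring
        _ ≤ _ := by
            rw [Finset.sum_Ico_succ_top hmn]
            have h2 : (0:ℝ) ≤ ∑ i ∈ Finset.Ico m n, c i :=
              Finset.sum_nonneg fun i _ => hc i
            nlinarith [(ha n).1]
  intro k n hn
  set N := χ (2 * k + 1) with hNdef
  set M := ⌈Real.log ((2 * L * (k + 1) : ℕ) : ℝ)⌉₊ with hMdef
  set T := θ (N + 1 + M) with hTdef
  -- bounds on partial sums of a over ranges
  have hsum_le : ∀ m : ℕ, ∑ i ∈ Finset.range m, a i ≤ (m : ℝ) := by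
    intro m
    calc ∑ i ∈ Finset.range m, a i ≤ ∑ i ∈ Finset.range m, (1:ℝ) :=
          Finset.sum_le_sum fun i _ => (ha i).2
      _ = m := by simp
  have hθT : ((N + 1 + M : ℕ) : ℝ) ≤ ∑ i ∈ Finset.range (T + 1), a i := hθ _
  have hT1 : N + 1 + M ≤ T + 1 := by
    have := (hθT.trans (hsum_le (T + 1)))
    exact_mod_cast this
  have hmn : N + 1 ≤ n := by omega
  -- sum of a over Ico (N+1) n is at least M
  have hsum_a : (M : ℝ) ≤ ∑ i ∈ Finset.Ico (N + 1) n, a i := by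
    have hsplit : ∑ i ∈ Finset.Ico (N + 1) n, a i
        = ∑ i ∈ Finset.range n, a i - ∑ i ∈ Finset.range (N + 1), a i := by
      rw [Finset.sum_Ico_eq_sub _ hmn]
    have hbig : ∑ i ∈ Finset.range (T + 1), a i ≤ ∑ i ∈ Finset.range n, a i := by
      apply Finset.sum_le_sum_of_subset_of_nonneg
      · exact Finset.range_subset_range.mpr (by omega)
      · intro i _ _; exact (ha i).1
    have hsmall := hsum_le (N + 1)
    have : ((N + 1 + M : ℕ) : ℝ) ≤ ∑ i ∈ Finset.range n, a i := hθT.trans hbig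
    push_cast at this hsmall
    rw [hsplit]; linarith
  -- the c-tail is small
  have hc_bound : ∑ i ∈ Finset.Ico (N + 1) n, c i ≤ 1 / (2 * (k:ℝ) + 2) := by
    have hrw : Finset.Ico (N + 1) n = Finset.Icc (N + 1) (N + (n - (N + 1))) := by
      rw [← Finset.Ico_add_one_right_eq_Icc]
      congr 1
      omega
    have := hχ (2 * k + 1) N le_rfl (n - (N + 1))
    rw [hrw]
    refine this.trans_eq ?_
    push_cast
    ring_nf
  -- the product is small
  have hprod : ∏ i ∈ Finset.Ico (N + 1) n, (1 - a i) ≤ Real.exp (-(M : ℝ)) := by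
    calc ∏ i ∈ Finset.Ico (N + 1) n, (1 - a i)
        ≤ ∏ i ∈ Finset.Ico (N + 1) n, Real.exp (-a i) := by
          apply Finset.prod_le_prod
          · intro i _; linarith [(ha i).2]
          · intro i _; linarith [Real.add_one_le_exp (-a i)]
      _ = Real.exp (∑ i ∈ Finset.Ico (N + 1) n, (-a i)) := (Real.exp_sum _ _).symm
      _ ≤ Real.exp (-(M : ℝ)) := by
          rw [Real.exp_le_exp, Finset.sum_neg_distrib]
          linarith
  have hLpos : (0:ℝ) < L := by exact_mod_cast hL1
  have hxpos : (0:ℝ) < ((2 * L * (k + 1) : ℕ) : ℝ) := by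
    have : 0 < 2 * L * (k + 1) := Nat.mul_pos (Nat.mul_pos two_pos hL1) (Nat.succ_pos k)
    exact_mod_cast this
  have hexpM : Real.exp (-(M : ℝ)) ≤ 1 / ((2 * L * (k + 1) : ℕ) : ℝ) := by
    have hMlog : Real.log ((2 * L * (k + 1) : ℕ) : ℝ) ≤ (M : ℝ) := Nat.le_ceil _
    calc Real.exp (-(M : ℝ)) ≤ Real.exp (-Real.log ((2 * L * (k + 1) : ℕ) : ℝ)) := by
          rw [Real.exp_le_exp]; linarith
      _ = 1 / ((2 * L * (k + 1) : ℕ) : ℝ) := by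
          rw [Real.exp_neg, Real.exp_log hxpos, one_div]
  -- assemble
  have hstep : s n ≤ Real.exp (-(M : ℝ)) * L + 1 / (2 * (k:ℝ) + 2) := by
    have h := key (N + 1) n hmn
    have hprod_nonneg : (0:ℝ) ≤ ∏ i ∈ Finset.Ico (N + 1) n, (1 - a i) :=
      Finset.prod_nonneg fun i _ => by linarith [(ha i).2]
    have hmul : (∏ i ∈ Finset.Ico (N + 1) n, (1 - a i)) * s (N + 1)
        ≤ Real.exp (-(M : ℝ)) * L :=
      mul_le_mul hprod (hLs _) (hs _) (Real.exp_pos _).le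
    linarith
  have hhalf : Real.exp (-(M : ℝ)) * L ≤ 1 / (2 * ((k:ℝ) + 1)) := by
    have h1 : Real.exp (-(M : ℝ)) * L ≤ (1 / ((2 * L * (k + 1) : ℕ) : ℝ)) * L :=
      mul_le_mul_of_nonneg_right hexpM hLpos.le
    have h2 : (1 / ((2 * L * (k + 1) : ℕ) : ℝ)) * L = 1 / (2 * ((k:ℝ) + 1)) := by
      push_cast
      field_simp
    linarith [h1, h2.le]
  have hfin : 1 / (2 * ((k:ℝ) + 1)) + 1 / (2 * (k:ℝ) + 2) = 1 / ((k:ℝ) + 1) := by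
    have : (0:ℝ) < (k:ℝ) + 1 := by positivity
    field_simp
    ring
  linarith
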